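/- arXiv:math/0702567 — 4 statements merged into one kernel-verified Lean document; each statement's English description precedes it below -/
import Mathlib

section
/- For every matroid M, the number of cyclic flats of M is at most the number of bases of M. -/
open Set

namespace Matroid

variable {α : Type*}

/-- A circuit of a matroid is a minimal dependent set. -/
def Circuit (M : Matroid α) (C : Set α) : Prop := Minimal M.Dep C

/-- A cyclic flat is a flat that is a (possibly empty) union of circuits. -/
def CyclicFlat (M : Matroid α) (F : Set α) : Prop :=
  M.IsFlat F ∧ ∃ 𝒞 : Set (Set α), (∀ C ∈ 𝒞, M.Circuit C) ∧ F = ⋃₀ 𝒞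

/-- A loop is an element whose singleton is dependent. -/
def Loop (M : Matroid α) (e : α) : Prop := M.Dep {e}

/-- A coloop is an element of the ground set that lies in every base. -/
def Coloop (M : Matroid α) (e : α) : Prop := e ∈ M.E ∧ ∀ B, M.IsBase B → e ∈ B

/-- Deletion of a set of elements from a matroid. -/
def delete' (M : Matroid α) (D : Set α) : Matroid α := M ↾ (M.E \ D)

/-- Contraction of a set of elements in a matroid, defined via duality. -/
def contract' (M : Matroid α) (X : Set α) : Matroid α := (M✶.delete' X)✶

/-- A hyperplane is a subset of the ground set whose complement is a cocircuit. -/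
def Hyperplane (M : Matroid α) (H : Set α) : Prop := H ⊆ M.E ∧ M✶.Circuit (M.E \ H)

end Matroid

open Matroid

section Aux

variable {α : Type*}

/-- Weight of a set: the (finite) sum of the weights of its elements. -/
noncomputable def wtAux (w : α → ℕ) (S : Set α) : ℕ := ∑ᶠ x ∈ S, w x

lemma wtAux_remove {w : α → ℕ} {S : Set α} (hS : S.Finite) {x : α} (hx : x ∈ S) :
    wtAux w S = w x + wtAux w (S \ {x}) := by
  conv_lhs => rw [← insert_eq_of_mem hx, ← insert_diff_singleton]
  exact finsum_mem_insert _ (fun h => h.2 rfl) hS.diff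

lemma wtAux_insert {w : α → ℕ} {S : Set α} (hS : S.Finite) {x y : α} (hy : y ∉ S) :
    wtAux w (insert y (S \ {x})) = w y + wtAux w (S \ {x}) :=
  finsum_mem_insert _ (fun h => hy h.1) hS.diff

/-- The set of elements of `B` that can be exchanged for a heavier element. -/
def smallSet (M : Matroid α) (w : α → ℕ) (B : Set α) : Set α :=
  {x ∈ B | ∃ y, (y ∈ M.E \ B) ∧ w x < w y ∧ M.IsBase (insert y (B \ {x}))}

lemma exists_base_recover {M : Matroid α} {w : α → ℕ} (hfin : M.E.Finite)
    (hw : Set.InjOn w M.E) {Z : Set α} (hZ : M.CyclicFlat Z) :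
    ∃ B, M.IsBase B ∧ M.closure (smallSet M w B) = Z := by
  obtain ⟨hflat, 𝒞, h𝒞, hZU⟩ := hZ
  have hZE : Z ⊆ M.E := hflat.subset_ground
  -- a minimum-weight basis `L` of `Z`
  obtain ⟨L0, hL0⟩ := M.exists_isBasis Z hZE
  obtain ⟨L, hL, hLmin⟩ := Set.exists_min_image {L | M.IsBasis L Z} (wtAux w)
    (hfin.finite_subsets.subset fun L hL => hL.indep.subset_ground) ⟨L0, hL0⟩
  simp only [mem_setOf_eq] at hL
  have hLfin : L.Finite := hfin.subset hL.indep.subset_ground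
  -- a maximum-weight extension `U` of `L` to a base, disjoint from `Z`
  have h𝒱E : ∀ V ∈ {V | V ∩ Z = ∅ ∧ M.IsBase (L ∪ V)}, V ⊆ M.E :=
    fun V hV => (subset_union_right (s := L)).trans hV.2.subset_ground
  have h𝒱ne : {V | V ∩ Z = ∅ ∧ M.IsBase (L ∪ V)}.Nonempty := by
    obtain ⟨B₀, hB₀, hLB₀⟩ := hL.indep.exists_isBase_superset
    have hint : L = B₀ ∩ Z := hL.eq_of_subset_indep (hB₀.indep.inter_right Z)
      (subset_inter hLB₀ hL.subset) inter_subset_right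
    exact ⟨B₀ \ Z, diff_inter_self, by rw [hint, inter_union_diff]; exact hB₀⟩
  obtain ⟨U, hU𝒱, hUmax⟩ := Set.exists_max_image {V | V ∩ Z = ∅ ∧ M.IsBase (L ∪ V)} (wtAux w)
    (hfin.finite_subsets.subset h𝒱E) h𝒱ne
  obtain ⟨hUZ, hB⟩ := hU𝒱
  have hUfin : U.Finite := hfin.subset ((subset_union_right (s := L)).trans hB.subset_ground)
  set B := L ∪ U with hBdef
  have hBE : B ⊆ M.E := hB.subset_ground
  have hLB : L ⊆ B := subset_union_left
  have hBZ : B ∩ Z = L := by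
    rw [hBdef, union_inter_distrib_right, hUZ, union_empty,
      inter_eq_self_of_subset_left hL.subset]
  have hsmall : smallSet M w B = L := by
    apply subset_antisymm
    · rintro x ⟨hxB, y, ⟨hyE, hyB⟩, hwxy, hB'⟩
      by_contra hxL
      have hxZ : x ∉ Z := fun hxZ => hxL (hBZ ▸ ⟨hxB, hxZ⟩ : x ∈ L)
      have hxU : x ∈ U := hxB.resolve_left (fun h => hxZ (hL.subset h))
      by_cases hyZ : y ∈ Z
      · have hiyL : insert y L ⊆ insert y (B \ {x}) :=
          insert_subset_insert (subset_diff_singleton hLB (fun h => hxZ (hL.subset h)))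
        have hind : M.Indep (insert y L) := hB'.indep.subset hiyL
        have heq := hL.eq_of_subset_indep hind (subset_insert _ _)
          (insert_subset hyZ hL.subset)
        exact hyB (hLB (heq ▸ mem_insert y L))
      · -- exchange inside `U`, contradicting maximality
        have hxLnot : x ∉ L := fun h => hxZ (hL.subset h)
        have hBx : B \ {x} = L ∪ (U \ {x}) := by
          rw [hBdef, union_diff_distrib, diff_singleton_eq_self hxLnot]
        have hV'mem : insert y (U \ {x}) ∈ {V | V ∩ Z = ∅ ∧ M.IsBase (L ∪ V)} := by
          constructor
          · apply eq_empty_iff_forall_notMem.mpr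
            rintro z ⟨hz1, hz2⟩
            rcases hz1 with rfl | hz1
            · exact hyZ hz2
            · exact (eq_empty_iff_forall_notMem.mp hUZ z) ⟨hz1.1, hz2⟩
          · rw [union_insert, ← hBx]; exact hB'
        have hcmp := hUmax _ hV'mem
        have hyU : y ∉ U := fun h => hyB (Or.inr h)
        rw [wtAux_insert hUfin hyU] at hcmp
        have h2 := wtAux_remove (w := w) hUfin hxU
        omega
    · intro x hx
      have hxZ : x ∈ Z := hL.subset hx
      have hxB : x ∈ B := hLB hx
      -- `x` lies in a circuit contained in `Z`, hence `x ∈ closure (Z \ {x})`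
      obtain ⟨C, hC𝒞, hxC⟩ : ∃ C ∈ 𝒞, x ∈ C := mem_sUnion.mp (hZU ▸ hxZ)
      have hCcirc := h𝒞 C hC𝒞
      have hCZ : C ⊆ Z := hZU ▸ subset_sUnion_of_mem hC𝒞
      have hCdep : M.Dep C := hCcirc.1
      have hCx_indep : M.Indep (C \ {x}) := by
        rw [← not_dep_iff (diff_subset.trans hCdep.subset_ground)]
        intro hdep
        exact (hCcirc.2 hdep diff_subset hxC).2 rfl
      have hxcl : x ∈ M.closure (C \ {x}) := by
        rw [hCx_indep.mem_closure_iff_of_notMem (fun h => h.2 rfl),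
          insert_diff_singleton, insert_eq_of_mem hxC]
        exact hCdep
      have hxclZ : x ∈ M.closure (Z \ {x}) :=
        M.closure_subset_closure (diff_subset_diff_left hCZ) hxcl
      -- a basis `J` of `Z \ {x}` is a basis of `Z`
      obtain ⟨J, hJ⟩ := M.exists_isBasis (Z \ {x}) (diff_subset.trans hZE)
      have hJZ : M.IsBasis J Z := by
        refine hJ.indep.isBasis_of_subset_of_subset_closure (hJ.subset.trans diff_subset) ?_
        rw [hJ.closure_eq_closure]
        intro z hz
        rcases eq_or_ne z x with rfl | hne
        · exact hxclZ
        · exact M.subset_closure _ (diff_subset.trans hZE) ⟨hz, hne⟩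
      -- augment `L \ {x}` from `J`
      have hLx : M.Indep (L \ {x}) := hL.indep.subset diff_subset
      have hcard : (L \ {x}).encard < J.encard := by
        rw [hJZ.encard_eq_encard hL, ← encard_diff_singleton_add_one hx]
        exact (ENat.lt_add_one_iff hLfin.diff.encard_lt_top.ne).mpr le_rfl
      obtain ⟨y, hyJ, hyind⟩ := hLx.augment hJZ.indep hcard
      have hyZx : y ∈ Z \ {x} := hJ.subset hyJ.1
      have hyZ : y ∈ Z := hyZx.1
      have hyx : y ≠ x := hyZx.2
      have hyL : y ∉ L := fun h => hyJ.2 ⟨h, hyx⟩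
      -- `K = insert y (L \ {x})` is a basis of `Z`
      have hKZ : insert y (L \ {x}) ⊆ Z := insert_subset hyZ (diff_subset.trans hL.subset)
      obtain ⟨K', hKK', hK'⟩ := hyind.subset_isBasis_of_subset hKZ hZE
      have hKcard : K'.encard ≤ (insert y (L \ {x})).encard := by
        rw [encard_insert_of_notMem hyJ.2, encard_diff_singleton_add_one hx,
          hKK'.encard_eq_encard hL]
      have hKeq : insert y (L \ {x}) = K' :=
        (hfin.subset hKK'.indep.subset_ground).eq_of_subset_of_encard_le' hK' hKcard
      have hKbasis : M.IsBasis (insert y (L \ {x})) Z := hKeq ▸ hKK'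
      -- weight comparison gives `w x < w y`
      have hyU : y ∉ U := fun h => (eq_empty_iff_forall_notMem.mp hUZ y) ⟨h, hyZ⟩
      have hyB : y ∉ B := fun h => h.elim hyL hyU
      have hwxy : w x < w y := by
        have h1 := wtAux_remove (w := w) hLfin hx
        have h2 := wtAux_insert (w := w) hLfin (x := x) hyL
        have h3 := hLmin _ hKbasis
        have hne : w x ≠ w y := fun h => hyx (hw (hZE hyZ) (hZE hxZ) h.symm)
        omega
      -- the exchanged set is a base
      have hxU : x ∉ U := fun h => (eq_empty_iff_forall_notMem.mp hUZ x) ⟨h, hxZ⟩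
      have hBx : B \ {x} = (L \ {x}) ∪ U := by
        rw [hBdef, union_diff_distrib, diff_singleton_eq_self hxU]
      have hB'eq : insert y (B \ {x}) = insert y (L \ {x}) ∪ U := by
        rw [hBx, insert_union]
      have hB'E : insert y (B \ {x}) ⊆ M.E :=
        insert_subset (hZE hyZ) (diff_subset.trans hBE)
      have hspan : M.Spanning (insert y (B \ {x})) := by
        rw [spanning_iff_closure_eq hB'E, hB'eq]
        have hKcl : M.closure (insert y (L \ {x})) = M.closure L := by
          rw [hKbasis.closure_eq_closure, hL.closure_eq_closure]
        calc M.closure (insert y (L \ {x}) ∪ U)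
            = M.closure (M.closure (insert y (L \ {x})) ∪ U) :=
              (M.closure_union_closure_left_eq _ _).symm
          _ = M.closure (M.closure L ∪ U) := by rw [hKcl]
          _ = M.closure (L ∪ U) := M.closure_union_closure_left_eq _ _
          _ = M.E := hB.closure_eq
      obtain ⟨B₁, hB₁, hB₁sub⟩ := hspan.exists_isBase_subset
      have hB'card : (insert y (B \ {x})).encard ≤ B₁.encard := by
        rw [hB₁.encard_eq_encard_of_isBase hB, encard_insert_of_notMem (fun h => hyB h.1),
          encard_diff_singleton_add_one hxB]
      have hB'base : M.IsBase (insert y (B \ {x})) := by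
        rwa [(hfin.subset hB'E).eq_of_subset_of_encard_le' hB₁sub hB'card] at hB₁
      exact ⟨hxB, y, ⟨hZE hyZ, hyB⟩, hwxy, hB'base⟩
  refine ⟨B, hB, ?_⟩
  rw [hsmall, hL.closure_eq_closure, hflat.closure]

end Aux

/-- The number of cyclic flats of a matroid is at most the number of bases. -/
theorem stmt0 {α : Type*} (M : Matroid α) (hfin : M.E.Finite) :
    {F | M.CyclicFlat F}.ncard ≤ {B | M.IsBase B}.ncard := by
  classical
  obtain ⟨w, hw⟩ := Set.countable_iff_exists_injOn.mp hfin.countable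
  have hmain : ∀ Z ∈ {F | M.CyclicFlat F}, ∃ B, M.IsBase B ∧ M.closure (smallSet M w B) = Z :=
    fun Z hZ => exists_base_recover hfin hw hZ
  choose! φ hφ1 hφ2 using hmain
  refine Set.ncard_le_ncard_of_injOn φ (fun Z hZ => hφ1 Z hZ) ?_ ?_
  · intro Z hZ Z' hZ' h
    rw [← hφ2 Z hZ, ← hφ2 Z' hZ', h]
  · exact hfin.finite_subsets.subset fun B hB => hB.subset_ground
end

section
/- Let M_n (n ≥ 2) be the matroid obtained from U_{n,2n} by adding one element parallel to an existing element. Then M_n has exactly three cyclic flats: the empty set, the 2-element parallel class, and the whole ground set; and the number of dependent hyperplanes of M_n is binomial(2n−1, n−2). -/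
open Set

open Matroid

section Aux

variable {α : Type*} {n : ℕ} {M : Matroid α} {a b : α}

/-- Characterization of dependent sets. -/
lemma aux_dep (hI : ∀ I, M.Indep I ↔ I ⊆ M.E ∧ I.ncard ≤ n ∧ ¬ ({a, b} ⊆ I))
    {D : Set α} : M.Dep D ↔ D ⊆ M.E ∧ (n + 1 ≤ D.ncard ∨ {a, b} ⊆ D) := by
  rw [Matroid.dep_iff, hI]
  constructor
  · rintro ⟨h1, h2⟩
    refine ⟨h2, ?_⟩
    by_contra hcon
    push_neg at hcon
    exact h1 ⟨h2, by omega, hcon.2⟩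
  · rintro ⟨h1, h2⟩
    refine ⟨fun h ↦ ?_, h1⟩
    rcases h2 with h2 | h2
    · omega
    · exact h.2.2 h2

/-- Characterization of circuits. -/
lemma aux_circuit (hn : 2 ≤ n) (hE : M.E.Finite)
    (ha : a ∈ M.E) (hb : b ∈ M.E)
    (hI : ∀ I, M.Indep I ↔ I ⊆ M.E ∧ I.ncard ≤ n ∧ ¬ ({a, b} ⊆ I))
    {C : Set α} :
    M.Circuit C ↔ C = {a, b} ∨ (C ⊆ M.E ∧ C.ncard = n + 1 ∧ ¬ ({a, b} ⊆ C)) := by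
  constructor
  · rintro ⟨hC, hmin⟩
    rw [aux_dep hI] at hC
    obtain ⟨hCE, hC2⟩ := hC
    by_cases hpair : {a, b} ⊆ C
    · left
      have hdep : M.Dep {a, b} := (aux_dep hI).mpr ⟨insert_subset ha (singleton_subset_iff.mpr hb), Or.inr le_rfl⟩
      exact subset_antisymm (hmin hdep hpair) hpair
    · right
      obtain (hC2 | hC2) := hC2
      swap
      · exact absurd hC2 hpair
      obtain ⟨S, hSC, hScard⟩ := Set.exists_subset_card_eq hC2
      have hSdep : M.Dep S := (aux_dep hI).mpr ⟨hSC.trans hCE, Or.inl hScard.ge⟩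
      have := hmin hSdep hSC
      have : C = S := subset_antisymm this hSC
      exact ⟨hCE, this ▸ hScard, hpair⟩
  · rintro (rfl | ⟨hCE, hCcard, hpair⟩)
    · refine ⟨(aux_dep hI).mpr ⟨insert_subset ha (singleton_subset_iff.mpr hb), Or.inr le_rfl⟩, ?_⟩
      intro D hD hDsub
      rw [aux_dep hI] at hD
      obtain ⟨hDE, hD2⟩ := hD
      rcases hD2 with hD2 | hD2
      · have hDfin : D.Finite := ((Set.finite_singleton b).insert a).subset hDsub
        have := Set.ncard_le_ncard hDsub ((Set.finite_singleton b).insert a)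
        have h2 : ({a, b} : Set α).ncard ≤ 2 := by
          apply (Set.ncard_insert_le _ _).trans
          simp
        omega
      · exact hD2
    · have hCfin : C.Finite := hE.subset hCE
      refine ⟨(aux_dep hI).mpr ⟨hCE, Or.inl hCcard.ge⟩, ?_⟩
      intro D hD hDsub
      rw [aux_dep hI] at hD
      obtain ⟨hDE, hD2⟩ := hD
      rcases hD2 with hD2 | hD2
      · have hle := Set.ncard_le_ncard hDsub hCfin
        exact (Set.eq_of_subset_of_ncard_le hDsub (by omega) hCfin).symm.subset
      · exact absurd (hD2.trans hDsub) hpair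

/-- Characterization of bases. -/
lemma aux_base (hn : 2 ≤ n) (hE : M.E.Finite) (hEcard : M.E.ncard = 2 * n + 1)
    (ha : a ∈ M.E) (hb : b ∈ M.E)
    (hI : ∀ I, M.Indep I ↔ I ⊆ M.E ∧ I.ncard ≤ n ∧ ¬ ({a, b} ⊆ I))
    {B : Set α} :
    M.IsBase B ↔ B ⊆ M.E ∧ B.ncard = n ∧ ¬ ({a, b} ⊆ B) := by
  rw [Matroid.isBase_iff_maximal_indep]
  constructor
  · rintro ⟨hBi, hBmax⟩
    obtain ⟨hBE, hBcard, hBpair⟩ := (hI B).mp hBi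
    refine ⟨hBE, ?_, hBpair⟩
    by_contra hne
    have hBlt : B.ncard < n := lt_of_le_of_ne hBcard hne
    have hBfin : B.Finite := hE.subset hBE
    -- find an element of M.E outside B ∪ {a, b}
    have hssub : ¬ (M.E ⊆ B ∪ {a, b}) := by
      intro hcon
      have h1 : (B ∪ {a, b}).ncard ≤ B.ncard + 2 := by
        apply (Set.ncard_union_le _ _).trans
        have : ({a, b} : Set α).ncard ≤ 2 := by
          apply (Set.ncard_insert_le _ _).trans; simp
        omega
      have h2 := Set.ncard_le_ncard hcon (hBfin.union ((Set.finite_singleton b).insert a))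
      omega
    obtain ⟨e, heE, heB⟩ := not_subset.mp hssub
    have heBi : M.Indep (insert e B) := by
      rw [hI]
      refine ⟨insert_subset heE hBE, ?_, ?_⟩
      · have := Set.ncard_insert_le e B
        omega
      · rintro hcon
        have hane : a ≠ e := fun h ↦ heB (by simp [← h])
        have hbne : b ≠ e := fun h ↦ heB (by simp [← h])
        have haB : a ∈ B := by
          have := hcon (show a ∈ ({a, b} : Set α) by simp)
          rcases this with h | h
          · exact absurd h hane
          · exact h
        have hbB : b ∈ B := by
          have := hcon (show b ∈ ({a, b} : Set α) by simp)
          rcases this with h | h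
          · exact absurd h hbne
          · exact h
        exact hBpair (by rintro x (rfl | rfl) <;> assumption)
    have := hBmax heBi (subset_insert e B)
    exact heB (Or.inl (this (mem_insert e B)))
  · rintro ⟨hBE, hBcard, hBpair⟩
    have hBfin : B.Finite := hE.subset hBE
    refine ⟨(hI B).mpr ⟨hBE, hBcard.le, hBpair⟩, ?_⟩
    intro I hIi hBI
    obtain ⟨hIE, hIcard, _⟩ := (hI I).mp hIi
    exact (Set.eq_of_subset_of_ncard_le hBI (by omega) (hE.subset hIE)).symm.subset

/-- Characterization of dual-dependent sets. -/
lemma aux_dual_dep (hn : 2 ≤ n) (hE : M.E.Finite) (hEcard : M.E.ncard = 2 * n + 1)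
    (ha : a ∈ M.E) (hb : b ∈ M.E) (hab : a ≠ b)
    (hI : ∀ I, M.Indep I ↔ I ⊆ M.E ∧ I.ncard ≤ n ∧ ¬ ({a, b} ⊆ I))
    {K : Set α} :
    M✶.Dep K ↔ K ⊆ M.E ∧
      (n + 2 ≤ (insert a K).ncard ∧ n + 2 ≤ (insert b K).ncard) := by
  rw [Matroid.dual_dep_iff_forall]
  constructor
  · rintro ⟨hfor, hKE⟩
    refine ⟨hKE, ?_, ?_⟩
    · -- if small, build a base disjoint from K avoiding a
      by_contra hcon
      push_neg at hcon
      have h1 : (insert a K).ncard ≤ n + 1 := by omega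
      have hsub : insert a K ⊆ M.E := insert_subset ha hKE
      have hdiff : n ≤ (M.E \ insert a K).ncard := by
        rw [Set.ncard_diff hsub (hE.subset hsub)]
        omega
      obtain ⟨B, hBsub, hBcard⟩ := Set.exists_subset_card_eq hdiff
      have hBbase : M.IsBase B := by
        rw [aux_base hn hE hEcard ha hb hI]
        refine ⟨hBsub.trans diff_subset, hBcard, fun hc ↦ ?_⟩
        have : a ∈ B := hc (by simp)
        exact (hBsub this).2 (mem_insert a K)
      obtain ⟨x, hxK, hxB⟩ := hfor B hBbase
      exact (hBsub hxB).2 (Or.inr hxK)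
    · by_contra hcon
      push_neg at hcon
      have h1 : (insert b K).ncard ≤ n + 1 := by omega
      have hsub : insert b K ⊆ M.E := insert_subset hb hKE
      have hdiff : n ≤ (M.E \ insert b K).ncard := by
        rw [Set.ncard_diff hsub (hE.subset hsub)]
        omega
      obtain ⟨B, hBsub, hBcard⟩ := Set.exists_subset_card_eq hdiff
      have hBbase : M.IsBase B := by
        rw [aux_base hn hE hEcard ha hb hI]
        refine ⟨hBsub.trans diff_subset, hBcard, fun hc ↦ ?_⟩
        have : b ∈ B := hc (by simp)
        exact (hBsub this).2 (mem_insert b K)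
      obtain ⟨x, hxK, hxB⟩ := hfor B hBbase
      exact (hBsub hxB).2 (Or.inr hxK)
  · rintro ⟨hKE, hcarda, hcardb⟩
    refine ⟨?_, hKE⟩
    intro B hBbase
    rw [aux_base hn hE hEcard ha hb hI] at hBbase
    obtain ⟨hBE, hBcard, hBpair⟩ := hBbase
    rw [Set.nonempty_iff_ne_empty]
    intro hcon
    have hdisj : Disjoint K B := disjoint_iff_inter_eq_empty.mpr hcon
    -- a ∉ B or b ∉ B
    have hcases : a ∉ B ∨ b ∉ B := by
      by_contra hc; push_neg at hc
      exact hBpair (by rintro x (rfl | rfl) <;> [exact hc.1; exact hc.2])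
    rcases hcases with haB | hbB
    · have hdisj2 : Disjoint (insert a K) B := by
        rw [Set.disjoint_left]
        rintro x (rfl | hxK)
        · exact haB
        · exact fun hxB ↦ Set.disjoint_left.mp hdisj hxK hxB
      have hsub : insert a K ∪ B ⊆ M.E := union_subset (insert_subset ha hKE) hBE
      have := Set.ncard_le_ncard hsub hE
      rw [Set.ncard_union_eq hdisj2 (hE.subset (insert_subset ha hKE)) (hE.subset hBE)] at this
      omega
    · have hdisj2 : Disjoint (insert b K) B := by
        rw [Set.disjoint_left]
        rintro x (rfl | hxK)
        · exact hbB
        · exact fun hxB ↦ Set.disjoint_left.mp hdisj hxK hxB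
      have hsub : insert b K ∪ B ⊆ M.E := union_subset (insert_subset hb hKE) hBE
      have := Set.ncard_le_ncard hsub hE
      rw [Set.ncard_union_eq hdisj2 (hE.subset (insert_subset hb hKE)) (hE.subset hBE)] at this
      omega

/-- Characterization of cocircuits. -/
lemma aux_cocircuit (hn : 2 ≤ n) (hE : M.E.Finite) (hEcard : M.E.ncard = 2 * n + 1)
    (ha : a ∈ M.E) (hb : b ∈ M.E) (hab : a ≠ b)
    (hI : ∀ I, M.Indep I ↔ I ⊆ M.E ∧ I.ncard ≤ n ∧ ¬ ({a, b} ⊆ I))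
    {K : Set α} :
    M✶.Circuit K ↔ K ⊆ M.E ∧
      ((K.ncard = n + 1 ∧ a ∉ K ∧ b ∉ K) ∨ (K.ncard = n + 2 ∧ a ∈ K ∧ b ∈ K)) := by
  have hdd := fun {K : Set α} ↦ aux_dual_dep hn hE hEcard ha hb hab hI (K := K)
  constructor
  · rintro ⟨hK, hmin⟩
    rw [hdd] at hK
    obtain ⟨hKE, hca, hcb⟩ := hK
    have hKfin : K.Finite := hE.subset hKE
    refine ⟨hKE, ?_⟩
    by_cases haK : a ∈ K
    · by_cases hbK : b ∈ K
      · -- both in K : ncard K ≥ n+2, shrink to n+2 containing a,b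
        right
        rw [Set.ncard_insert_of_mem haK] at hca
        have hd : n ≤ (K \ {a, b}).ncard := by
          rw [Set.ncard_diff (by rintro x (rfl | rfl) <;> assumption) ((Set.finite_singleton b).insert a)]
          have : ({a, b} : Set α).ncard = 2 := Set.ncard_pair hab
          omega
        obtain ⟨S, hSsub, hScard⟩ := Set.exists_subset_card_eq hd
        set K' : Set α := insert a (insert b S) with hK'
        have haS : a ∉ S := fun h ↦ (hSsub h).2 (by simp)
        have hbS : b ∉ S := fun h ↦ (hSsub h).2 (by simp)
        have hK'card : K'.ncard = n + 2 := by
          rw [hK', Set.ncard_insert_of_notMem (by simp [haS, hab])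
            ((hKfin.subset (hSsub.trans diff_subset)).insert b),
            Set.ncard_insert_of_notMem hbS (hKfin.subset (hSsub.trans diff_subset)), hScard]
        have hK'sub : K' ⊆ K := by
          rw [hK']
          exact insert_subset haK (insert_subset hbK (hSsub.trans diff_subset))
        have hK'dep : M✶.Dep K' := by
          rw [hdd]
          refine ⟨hK'sub.trans hKE, ?_, ?_⟩
          · rw [Set.ncard_insert_of_mem (by simp [hK'])]; omega
          · rw [Set.ncard_insert_of_mem (by simp [hK'])]; omega
        have heq : K = K' := subset_antisymm (hmin hK'dep hK'sub) hK'sub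
        rw [heq]
        exact ⟨hK'card, by simp [hK'], by simp [hK']⟩
      · -- a ∈ K, b ∉ K : contradiction with minimality
        exfalso
        rw [Set.ncard_insert_of_mem haK] at hca
        have hd : n + 1 ≤ (K \ {a}).ncard := by
          rw [Set.ncard_diff (by simpa using haK) (Set.finite_singleton a)]
          simp only [Set.ncard_singleton]
          omega
        obtain ⟨S, hSsub, hScard⟩ := Set.exists_subset_card_eq hd
        have haS : a ∉ S := fun h ↦ (hSsub h).2 rfl
        have hbS : b ∉ S := fun h ↦ hbK (hSsub h).1
        have hSdep : M✶.Dep S := by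
          rw [hdd]
          have hSfin : S.Finite := hKfin.subset (hSsub.trans diff_subset)
          refine ⟨(hSsub.trans diff_subset).trans hKE, ?_, ?_⟩
          · rw [Set.ncard_insert_of_notMem haS hSfin]; omega
          · rw [Set.ncard_insert_of_notMem hbS hSfin]; omega
        have := hmin hSdep (hSsub.trans diff_subset)
        exact haS (this haK)
    · by_cases hbK : b ∈ K
      · exfalso
        rw [Set.ncard_insert_of_mem hbK] at hcb
        have hd : n + 1 ≤ (K \ {b}).ncard := by
          rw [Set.ncard_diff (by simpa using hbK) (Set.finite_singleton b)]
          simp only [Set.ncard_singleton]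
          omega
        obtain ⟨S, hSsub, hScard⟩ := Set.exists_subset_card_eq hd
        have hbS : b ∉ S := fun h ↦ (hSsub h).2 rfl
        have haS : a ∉ S := fun h ↦ haK (hSsub h).1
        have hSdep : M✶.Dep S := by
          rw [hdd]
          have hSfin : S.Finite := hKfin.subset (hSsub.trans diff_subset)
          refine ⟨(hSsub.trans diff_subset).trans hKE, ?_, ?_⟩
          · rw [Set.ncard_insert_of_notMem haS hSfin]; omega
          · rw [Set.ncard_insert_of_notMem hbS hSfin]; omega
        have := hmin hSdep (hSsub.trans diff_subset)
        exact hbS (this hbK)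
      · -- neither in K : ncard K ≥ n+1, shrink to n+1
        left
        rw [Set.ncard_insert_of_notMem haK hKfin] at hca
        obtain ⟨S, hSsub, hScard⟩ := Set.exists_subset_card_eq (show n + 1 ≤ K.ncard by omega)
        have haS : a ∉ S := fun h ↦ haK (hSsub h)
        have hbS : b ∉ S := fun h ↦ hbK (hSsub h)
        have hSdep : M✶.Dep S := by
          rw [hdd]
          have hSfin : S.Finite := hKfin.subset hSsub
          refine ⟨hSsub.trans hKE, ?_, ?_⟩
          · rw [Set.ncard_insert_of_notMem haS hSfin]; omega
          · rw [Set.ncard_insert_of_notMem hbS hSfin]; omega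
        have heq := subset_antisymm (hmin hSdep hSsub) hSsub
        rw [heq]
        exact ⟨hScard, heq ▸ haK, heq ▸ hbK⟩
  · rintro ⟨hKE, (⟨hKcard, haK, hbK⟩ | ⟨hKcard, haK, hbK⟩)⟩
    · have hKfin : K.Finite := hE.subset hKE
      refine ⟨hdd.mpr ⟨hKE, ?_, ?_⟩, ?_⟩
      · rw [Set.ncard_insert_of_notMem haK hKfin]; omega
      · rw [Set.ncard_insert_of_notMem hbK hKfin]; omega
      · intro D hD hDsub
        rw [hdd] at hD
        obtain ⟨hDE, hca, hcb⟩ := hD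
        have haD : a ∉ D := fun h ↦ haK (hDsub h)
        rw [Set.ncard_insert_of_notMem haD (hE.subset hDE)] at hca
        exact (Set.eq_of_subset_of_ncard_le hDsub (by omega) hKfin).symm.subset
    · have hKfin : K.Finite := hE.subset hKE
      refine ⟨hdd.mpr ⟨hKE, ?_, ?_⟩, ?_⟩
      · rw [Set.ncard_insert_of_mem haK]; omega
      · rw [Set.ncard_insert_of_mem hbK]; omega
      · intro D hD hDsub
        rw [hdd] at hD
        obtain ⟨hDE, hca, hcb⟩ := hD
        have hsa : insert a D ⊆ K := insert_subset haK hDsub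
        have hsb : insert b D ⊆ K := insert_subset hbK hDsub
        have hea : insert a D = K :=
          Set.eq_of_subset_of_ncard_le hsa (by omega) hKfin
        have heb : insert b D = K :=
          Set.eq_of_subset_of_ncard_le hsb (by omega) hKfin
        intro x hxK
        rcases eq_or_ne x a with rfl | hxa
        · rw [← heb] at hxK
          rcases hxK with h | h
          · exact absurd h hab
          · exact h
        · rw [← hea] at hxK
          rcases hxK with h | h
          · exact absurd h hxa
          · exact h

/-- The empty set is a flat. -/
lemma aux_flat_empty (hn : 2 ≤ n) (hab : a ≠ b)
    (hI : ∀ I, M.Indep I ↔ I ⊆ M.E ∧ I.ncard ≤ n ∧ ¬ ({a, b} ⊆ I)) :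
    M.IsFlat (∅ : Set α) := by
  constructor
  · intro I X hIF hIX
    have hIempty : I = ∅ := subset_empty_iff.mp hIF.subset
    subst hIempty
    intro x hxX
    exfalso
    have hdep := hIX.insert_dep ⟨hxX, notMem_empty x⟩
    rw [insert_empty_eq] at hdep
    apply hdep.not_indep
    rw [hI]
    refine ⟨singleton_subset_iff.mpr (hIX.subset_ground hxX), by rw [Set.ncard_singleton]; omega, ?_⟩
    intro hcon
    have h1 := hcon (show a ∈ ({a, b} : Set α) by simp)
    have h2 := hcon (show b ∈ ({a, b} : Set α) by simp)
    simp only [mem_singleton_iff] at h1 h2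
    exact hab (h1.trans h2.symm)
  · exact empty_subset _

/-- The pair `{a, b}` is a flat. -/
lemma aux_flat_pair (hn : 2 ≤ n) (ha : a ∈ M.E) (hb : b ∈ M.E) (hab : a ≠ b)
    (hI : ∀ I, M.Indep I ↔ I ⊆ M.E ∧ I.ncard ≤ n ∧ ¬ ({a, b} ⊆ I)) :
    M.IsFlat ({a, b} : Set α) := by
  constructor
  · intro I X hIF hIX
    have hIsub : I ⊆ {a, b} := hIF.subset
    have hIindep := hIF.indep
    obtain ⟨hIE, hIcard, hIpair⟩ := (hI I).mp hIindep
    have hIcard1 : I.ncard ≤ 1 := by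
      by_contra hcon
      push_neg at hcon
      have hle : I.ncard ≤ ({a, b} : Set α).ncard := Set.ncard_le_ncard hIsub ((Set.finite_singleton b).insert a)
      rw [Set.ncard_pair hab] at hle
      have : I = {a, b} := Set.eq_of_subset_of_ncard_le hIsub
        (by rw [Set.ncard_pair hab]; omega) ((Set.finite_singleton b).insert a)
      exact hIpair this.symm.subset
    intro x hxX
    by_contra hxab
    have hxI : x ∉ I := fun h ↦ hxab (hIsub h)
    have hdep := hIX.insert_dep ⟨hxX, hxI⟩
    apply hdep.not_indep
    rw [hI]
    refine ⟨insert_subset (hIX.subset_ground hxX) hIE, ?_, ?_⟩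
    · have := Set.ncard_insert_le x I
      omega
    · intro hcon
      have h1 := hcon (show a ∈ ({a, b} : Set α) by simp)
      have h2 := hcon (show b ∈ ({a, b} : Set α) by simp)
      rcases h1 with h1 | h1
      · exact hxab (by simp [← h1])
      · rcases h2 with h2 | h2
        · exact hxab (by simp [← h2])
        · exact hIpair (by rintro y (rfl | rfl) <;> assumption)
  · exact insert_subset ha (singleton_subset_iff.mpr hb)

end Aux

/-- Adding an element `b` parallel to an element `a` of `U_{n,2n}` gives a matroid whose
only cyclic flats are `∅`, `{a, b}` and the ground set, and whose number of dependent
hyperplanes is `binomial(2n-1, n-2)`. -/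
theorem stmt15 {α : Type*} (n : ℕ) (hn : 2 ≤ n) (M : Matroid α)
    (hE : M.E.Finite) (hEcard : M.E.ncard = 2 * n + 1)
    (a b : α) (ha : a ∈ M.E) (hb : b ∈ M.E) (hab : a ≠ b)
    (hI : ∀ I, M.Indep I ↔ I ⊆ M.E ∧ I.ncard ≤ n ∧ ¬ ({a, b} ⊆ I)) :
    {F | M.CyclicFlat F} = {∅, {a, b}, M.E} ∧
    {H | M.Hyperplane H ∧ ¬ M.Indep H}.ncard = (2 * n - 1).choose (n - 2) := by
  classical
  have hcirc : ∀ {C : Set α}, M.Circuit C ↔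
      C = {a, b} ∨ (C ⊆ M.E ∧ C.ncard = n + 1 ∧ ¬ ({a, b} ⊆ C)) :=
    fun {C} ↦ aux_circuit hn hE ha hb hI
  have hcocirc : ∀ {K : Set α}, M✶.Circuit K ↔ K ⊆ M.E ∧
      ((K.ncard = n + 1 ∧ a ∉ K ∧ b ∉ K) ∨ (K.ncard = n + 2 ∧ a ∈ K ∧ b ∈ K)) :=
    fun {K} ↦ aux_cocircuit hn hE hEcard ha hb hab hI
  have hpairE : ({a, b} : Set α) ⊆ M.E := insert_subset ha (singleton_subset_iff.mpr hb)
  have hpairfin : ({a, b} : Set α).Finite := (Set.finite_singleton b).insert a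
  have hpaircard : ({a, b} : Set α).ncard = 2 := Set.ncard_pair hab
  constructor
  · -- cyclic flats
    ext F
    simp only [mem_setOf_eq, mem_insert_iff, mem_singleton_iff]
    constructor
    · rintro ⟨hF, 𝒞, h𝒞, hFU⟩
      by_cases hex : ∃ C ∈ 𝒞, C ≠ {a, b}
      · right; right
        obtain ⟨C, hC𝒞, hCne⟩ := hex
        rcases hcirc.mp (h𝒞 C hC𝒞) with rfl | ⟨hCE, hCcard, hCpair⟩
        · exact absurd rfl hCne
        -- C \ {a, b} has at least n elements
        have hd : n ≤ (C \ {a, b}).ncard := by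
          by_cases haC : a ∈ C
          · have hbC : b ∉ C := fun hbC ↦ hCpair (by rintro x (rfl | rfl) <;> assumption)
            have heq : C \ {a, b} = C \ {a} := by
              ext x
              simp only [mem_diff, mem_insert_iff, mem_singleton_iff]
              constructor
              · rintro ⟨h1, h2⟩; exact ⟨h1, fun h ↦ h2 (Or.inl h)⟩
              · rintro ⟨h1, h2⟩
                refine ⟨h1, ?_⟩
                rintro (rfl | rfl)
                · exact h2 rfl
                · exact hbC h1
            rw [heq, Set.ncard_diff (by simpa using haC) (Set.finite_singleton a),
              Set.ncard_singleton]
            omega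
          · have heq : C \ {a, b} ⊇ C \ {b} := by
              intro x hx
              refine ⟨hx.1, ?_⟩
              rintro (rfl | rfl)
              · exact haC hx.1
              · exact hx.2 rfl
            have h2 := Set.ncard_le_ncard_diff_add_ncard C {b} (Set.finite_singleton b)
            have h3 := Set.ncard_le_ncard heq ((hE.subset hCE).diff)
            rw [Set.ncard_singleton] at h2
            omega
        obtain ⟨J, hJsub, hJcard⟩ := Set.exists_subset_card_eq hd
        have hJE : J ⊆ M.E := hJsub.trans (diff_subset.trans hCE)
        have hJa : a ∉ J := fun h ↦ (hJsub h).2 (by simp)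
        have hJb : b ∉ J := fun h ↦ (hJsub h).2 (by simp)
        have hJbase : M.IsBase J := by
          rw [aux_base hn hE hEcard ha hb hI]
          exact ⟨hJE, hJcard, fun hc ↦ hJa (hc (by simp))⟩
        have hJF : J ⊆ F := by
          rw [hFU]
          exact fun x hx ↦ ⟨C, hC𝒞, (hJsub hx).1⟩
        obtain ⟨I, hIbasis, hJI⟩ :=
          hJbase.indep.subset_isBasis_of_subset hJF hF.subset_ground
        obtain ⟨_, hIcard, _⟩ := (hI I).mp hIbasis.indep
        have hJeq : J = I := Set.eq_of_subset_of_ncard_le hJI (by omega)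
          (hE.subset hIbasis.indep.subset_ground)
        rw [← hJeq] at hIbasis
        exact subset_antisymm hF.subset_ground
          (hF.subset_of_isBasis_of_isBasis hIbasis hJbase.isBasis_ground)
      · push_neg at hex
        rcases Set.eq_empty_or_nonempty F with hFe | hFne
        · exact Or.inl hFe
        right; left
        obtain ⟨x, hxF⟩ := hFne
        obtain ⟨C, hC𝒞, hxC⟩ := by rw [hFU] at hxF; exact hxF
        apply subset_antisymm
        · rw [hFU]
          rintro y ⟨C', hC', hyC'⟩
          rw [hex C' hC'] at hyC'
          exact hyC'
        · rw [hFU]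
          exact fun y hy ↦ ⟨C, hC𝒞, (hex C hC𝒞).symm ▸ hy⟩
    · rintro (rfl | rfl | rfl)
      · exact ⟨aux_flat_empty hn hab hI, ∅, by simp, by simp⟩
      · refine ⟨aux_flat_pair hn ha hb hab hI, {{a, b}}, ?_, (Set.sUnion_singleton _).symm⟩
        intro C hC
        rw [mem_singleton_iff] at hC
        rw [hC]
        exact hcirc.mpr (Or.inl rfl)
      · refine ⟨M.ground_isFlat, {C | M.Circuit C}, fun C hC ↦ hC, ?_⟩
        apply subset_antisymm
        · intro e heE
          have hEab : (M.E \ {a, b}).ncard = 2 * n - 1 := by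
            rw [Set.ncard_diff hpairE hpairfin, hpaircard, hEcard]
            omega
          have hd : n ≤ ((M.E \ {a, b}) \ {e}).ncard := by
            have h2 := Set.ncard_le_ncard_diff_add_ncard (M.E \ {a, b}) {e}
              (Set.finite_singleton e)
            rw [Set.ncard_singleton] at h2
            omega
          obtain ⟨S, hSsub, hScard⟩ := Set.exists_subset_card_eq hd
          have heS : e ∉ S := fun h ↦ (hSsub h).2 rfl
          have hSE : S ⊆ M.E := hSsub.trans (diff_subset.trans diff_subset)
          have hCc : M.Circuit (insert e S) := by
            apply hcirc.mpr
            right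
            refine ⟨insert_subset heE hSE, ?_, ?_⟩
            · rw [Set.ncard_insert_of_notMem heS (hE.subset hSE)]
              omega
            · intro hcon
              have h1 := hcon (show a ∈ ({a, b} : Set α) by simp)
              have h2 := hcon (show b ∈ ({a, b} : Set α) by simp)
              rcases h1 with h1 | h1
              · rcases h2 with h2 | h2
                · exact hab (h1.trans h2.symm)
                · exact ((hSsub h2).1.2 (by simp))
              · exact ((hSsub h1).1.2 (by simp))
          exact ⟨insert e S, hCc, mem_insert e S⟩
        · rintro x ⟨C, hC, hxC⟩
          rcases hcirc.mp hC with rfl | ⟨hCE, _, _⟩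
          · exact hpairE hxC
          · exact hCE hxC
  · -- counting dependent hyperplanes
    have hset : {H | M.Hyperplane H ∧ ¬ M.Indep H} =
        {H | H ⊆ M.E ∧ H.ncard = n ∧ a ∈ H ∧ b ∈ H} := by
      ext H
      simp only [mem_setOf_eq]
      constructor
      · rintro ⟨⟨hHE, hKc⟩, hHdep⟩
        have hHfin : H.Finite := hE.subset hHE
        have hHle := Set.ncard_le_ncard hHE hE
        have hKcard : (M.E \ H).ncard = 2 * n + 1 - H.ncard := by
          rw [Set.ncard_diff hHE hHfin, hEcard]
        obtain ⟨-, (⟨hc, haK, hbK⟩ | ⟨hc, haK, hbK⟩)⟩ := hcocirc.mp hKc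
        · have haH : a ∈ H := by by_contra h; exact haK ⟨ha, h⟩
          have hbH : b ∈ H := by by_contra h; exact hbK ⟨hb, h⟩
          exact ⟨hHE, by omega, haH, hbH⟩
        · exfalso
          apply hHdep
          rw [hI]
          refine ⟨hHE, by omega, fun hcon ↦ haK.2 (hcon (by simp))⟩
      · rintro ⟨hHE, hHcard, haH, hbH⟩
        have hHfin : H.Finite := hE.subset hHE
        refine ⟨⟨hHE, hcocirc.mpr ⟨diff_subset, Or.inl ⟨?_, fun h ↦ h.2 haH,
          fun h ↦ h.2 hbH⟩⟩⟩, ?_⟩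
        · rw [Set.ncard_diff hHE hHfin, hEcard, hHcard]
          omega
        · intro hind
          exact ((hI H).mp hind).2.2 (by rintro x (rfl | rfl) <;> assumption)
    rw [hset]
    -- counting via finsets
    set t : Finset α := hE.toFinset with ht
    have hat : a ∈ t := hE.mem_toFinset.mpr ha
    have hbt : b ∈ (t.erase a) := Finset.mem_erase.mpr ⟨hab.symm, hE.mem_toFinset.mpr hb⟩
    have htcard : t.card = 2 * n + 1 := by
      rw [← Set.ncard_eq_toFinset_card _ hE, hEcard]
    have htcard2 : ((t.erase a).erase b).card = 2 * n - 1 := by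
      rw [Finset.card_erase_of_mem hbt, Finset.card_erase_of_mem hat, htcard]
      omega
    set 𝒮 : Finset (Finset α) := ((t.erase a).erase b).powersetCard (n - 2) with h𝒮
    have himg : {H | H ⊆ M.E ∧ H.ncard = n ∧ a ∈ H ∧ b ∈ H} =
        (fun s : Finset α ↦ (↑s ∪ {a, b} : Set α)) '' ↑𝒮 := by
      ext H
      simp only [mem_setOf_eq, mem_image, Finset.mem_coe, h𝒮, Finset.mem_powersetCard]
      constructor
      · rintro ⟨hHE, hHcard, haH, hbH⟩
        have hHfin : H.Finite := hE.subset hHE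
        have hdfin : (H \ {a, b}).Finite := hHfin.diff
        refine ⟨hdfin.toFinset, ⟨?_, ?_⟩, ?_⟩
        · intro x hx
          rw [Set.Finite.mem_toFinset] at hx
          refine Finset.mem_erase.mpr ⟨fun h ↦ hx.2 (by simp [h]),
            Finset.mem_erase.mpr ⟨fun h ↦ hx.2 (by simp [h]), hE.mem_toFinset.mpr (hHE hx.1)⟩⟩
        · rw [← Set.ncard_eq_toFinset_card _ hdfin,
            Set.ncard_diff (by rintro x (rfl | rfl) <;> assumption) hpairfin,
            hHcard, hpaircard]
        · rw [Set.Finite.coe_toFinset]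
          rw [Set.diff_union_of_subset (by rintro x (rfl | rfl) <;> assumption)]
      · rintro ⟨s, ⟨hssub, hscard⟩, rfl⟩
        have has : a ∉ s := fun h ↦ (Finset.mem_erase.mp (Finset.mem_erase.mp (hssub h)).2).1 rfl
        have hbs : b ∉ s := fun h ↦ (Finset.mem_erase.mp (hssub h)).1 rfl
        have hsE : (↑s : Set α) ⊆ M.E := by
          intro x hx
          have := hssub hx
          have := (Finset.mem_erase.mp (Finset.mem_erase.mp this).2).2
          exact hE.mem_toFinset.mp this
        refine ⟨union_subset hsE hpairE, ?_, by simp, by simp⟩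
        rw [Set.ncard_union_eq (by
            rw [Set.disjoint_left]
            rintro x hx (rfl | rfl)
            · exact has hx
            · exact hbs hx) (s.finite_toSet) hpairfin,
          Set.ncard_coe_finset, hscard, hpaircard]
        omega
    rw [himg]
    rw [Set.ncard_image_of_injOn, Set.ncard_coe_finset, h𝒮, Finset.card_powersetCard, htcard2]
    -- injectivity
    intro s1 hs1 s2 hs2 heq
    simp only [Finset.mem_coe, h𝒮, Finset.mem_powersetCard] at hs1 hs2
    have key : ∀ s : Finset α, s ⊆ (t.erase a).erase b →
        ((↑s ∪ {a, b} : Set α) \ {a, b}) = ↑s := by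
      intro s hs
      have has : a ∉ s := fun h ↦ (Finset.mem_erase.mp (Finset.mem_erase.mp (hs h)).2).1 rfl
      have hbs : b ∉ s := fun h ↦ (Finset.mem_erase.mp (hs h)).1 rfl
      ext x
      simp only [Set.mem_diff, Set.mem_union, Finset.mem_coe, Set.mem_insert_iff,
        Set.mem_singleton_iff]
      constructor
      · rintro ⟨h1 | h1, h2⟩
        · exact h1
        · exact absurd h1 h2
      · intro hx
        refine ⟨Or.inl hx, ?_⟩
        rintro (rfl | rfl)
        · exact has hx
        · exact hbs hx
    apply Finset.coe_injective
    rw [← key s1 hs1.1, ← key s2 hs2.1]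
    exact congrArg (fun X ↦ X \ ({a, b} : Set α)) heq
end

section
/- Let M be a matroid on ground set E with a minor N isomorphic to some matroid on a set A ⊆ E, say M / X' \ Y' where (X', Y') partitions E − A and X' is independent. Suppose the minor has t > 0 circuits C'_1, …, C'_t, and for each i choose a circuit C_i of M with C_i ⊆ C'_i ∪ X' and C'_i = C_i − X'. Set X = (C_1 ∪ ⋯ ∪ C_t) − A and Y = E − (A ∪ X). Then M / X \ Y = M / X' \ Y'. -/
open Set

open Matroid

private lemma contract_ground' {α : Type*} (M : Matroid α) (X : Set α) :
    (M.contract' X).E = M.E \ X := rfl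

private lemma indep_contract_iff' {α : Type*} {M : Matroid α} {X : Set α} (hX : M.Indep X)
    {I : Set α} : (M.contract' X).Indep I ↔ I ⊆ M.E \ X ∧ M.Indep (I ∪ X) := by
  have hXE : X ⊆ M.E := hX.subset_ground
  rw [Matroid.contract', Matroid.delete', Matroid.dual_indep_iff_exists']
  simp only [Matroid.restrict_ground_eq, Matroid.dual_ground]
  constructor
  · rintro ⟨hIK, B', hB', hIB'⟩
    replace hB' : M✶.IsBasis B' (M.E \ X) :=
      (Matroid.isBase_restrict_iff (M := M✶) (X := M.E \ X) Set.diff_subset).mp hB'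
    obtain ⟨Bd, hBd, hEq⟩ := hB'.exists_isBase
    have hBdE : Bd ⊆ M.E := hBd.subset_ground
    have hB : M.IsBase (M.E \ Bd) := hBd.compl_isBase_of_dual
    have hIB : I ⊆ M.E \ Bd := by
      intro e he
      refine ⟨(hIK he).1, fun heB => ?_⟩
      exact hIB'.ne_of_mem he (hEq ▸ ⟨heB, hIK he⟩) rfl
    have hbasis : M.IsBasis ((M.E \ Bd) ∩ X) X := by
      rw [hB.inter_isBasis_iff_compl_inter_isBasis_dual hXE]
      rw [Set.diff_diff_cancel_left hBdE]
      rw [show Bd ∩ (M.E \ X) = B' from hEq.symm]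
      exact hB'
    have hXB : X ⊆ M.E \ Bd := by
      have := hbasis.eq_of_subset_indep hX Set.inter_subset_right Subset.rfl
      rw [← this]; exact Set.inter_subset_left
    exact ⟨hIK, hB.indep.subset (Set.union_subset hIB hXB)⟩
  · rintro ⟨hIK, hIX⟩
    obtain ⟨B, hB, hsub⟩ := hIX.exists_isBase_superset
    have hXB : X ⊆ B := Set.union_subset_iff.mp hsub |>.2
    have hbasis : M.IsBasis (B ∩ X) X := by
      rw [Set.inter_eq_right.mpr hXB]; exact hX.isBasis_self
    have hB' : M✶.IsBasis ((M.E \ B) ∩ (M.E \ X)) (M.E \ X) :=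
      (hB.inter_isBasis_iff_compl_inter_isBasis_dual hXE).mp hbasis
    refine ⟨hIK, (M.E \ B) ∩ (M.E \ X), ?_, ?_⟩
    · exact (Matroid.isBase_restrict_iff (M := M✶) (X := M.E \ X) Set.diff_subset).mpr hB'
    · refine Set.disjoint_left.mpr fun e he hemem => ?_
      exact hemem.1.2 (Set.union_subset_iff.mp hsub |>.1 he)

private lemma exists_circuit_subset' {α : Type*} {M : Matroid α} {D : Set α}
    (hD : M.Dep D) (hfin : D.Finite) : ∃ C, C ⊆ D ∧ M.Circuit C := by
  set s : Set (Set α) := {C | C ⊆ D ∧ M.Dep C} with hs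
  have hsfin : s.Finite := hfin.finite_subsets.subset fun C hC => hC.1
  obtain ⟨a, ha, hmin⟩ := Set.Finite.exists_minimal hsfin ⟨D, Subset.rfl, hD⟩
  refine ⟨a, ha.1, ha.2, fun y hy hya => ?_⟩
  exact hmin ⟨hya.trans ha.1, hy⟩ hya

/-- If `M / X' \ Y'` is a minor on `A` with circuits `C'_1, …, C'_t` (`t > 0`), and
`C_i` is a circuit of `M` with `C_i ⊆ C'_i ∪ X'` and `C'_i = C_i \ X'`, then contracting
`X = (C_1 ∪ ⋯ ∪ C_t) \ A` and deleting `Y = E \ (A ∪ X)` yields the same minor. -/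
theorem stmt16 {α : Type*} (M : Matroid α) (hfin : M.E.Finite)
    (A X' Y' : Set α) (hA : A ⊆ M.E)
    (hpart : X' ∪ Y' = M.E \ A) (hdisj : Disjoint X' Y') (hX' : M.Indep X')
    (t : ℕ) (ht : 0 < t) (C' C : Fin t → Set α)
    (hC'all : ∀ D, ((M.contract' X').delete' Y').Circuit D ↔ ∃ i, D = C' i)
    (hC : ∀ i, M.Circuit (C i) ∧ C i ⊆ C' i ∪ X' ∧ C' i = C i \ X') :
    (M.contract' ((⋃ i, C i) \ A)).delete' (M.E \ (A ∪ ((⋃ i, C i) \ A))) =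
      (M.contract' X').delete' Y' := by
  classical
  set X : Set α := (⋃ i, C i) \ A with hXdef
  have hXE' : X' ⊆ M.E := hX'.subset_ground
  have hX'A : Disjoint X' A := by
    have : X' ⊆ M.E \ A := hpart ▸ Set.subset_union_left
    exact Set.disjoint_left.mpr fun e he => (this he).2
  -- ground of the RHS minor is A
  have hRground : ((M.contract' X').E \ Y') = A := by
    rw [contract_ground']
    have hY' : Y' ⊆ M.E \ A := hpart ▸ Set.subset_union_right
    ext e
    constructor
    · rintro ⟨⟨heE, heX'⟩, heY'⟩
      by_contra heA
      have : e ∈ X' ∪ Y' := hpart ▸ ⟨heE, heA⟩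
      rcases this with h | h
      · exact heX' h
      · exact heY' h
    · intro he
      exact ⟨⟨hA he, fun h => (hX'A.ne_of_mem h he) rfl⟩,
        fun h => (hY' h).2 he⟩
  -- each C' i is a circuit of the minor, hence contained in A
  have hC'sub : ∀ i, C' i ⊆ A := by
    intro i
    have h := (hC'all (C' i)).mpr ⟨i, rfl⟩
    have := h.prop.subset_ground
    rwa [Matroid.delete', Matroid.restrict_ground_eq, hRground] at this
  -- X ⊆ X'
  have hXsub : X ⊆ X' := by
    rintro e ⟨he, heA⟩
    obtain ⟨_, ⟨i, rfl⟩, hei⟩ := he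
    rcases (hC i).2.1 hei with h | h
    · exact absurd (hC'sub i h) heA
    · exact h
  have hXindep : M.Indep X := hX'.subset hXsub
  have hXA : Disjoint X A := Set.disjoint_left.mpr fun e he => he.2
  have hXME : X ⊆ M.E := hXsub.trans hXE'
  -- ground of LHS minor is A
  have hLground : ((M.contract' X).E \ (M.E \ (A ∪ X))) = A := by
    rw [contract_ground']
    ext e
    constructor
    · rintro ⟨⟨heE, heX⟩, he2⟩
      have : e ∈ A ∪ X := by by_contra h; exact he2 ⟨heE, h⟩
      rcases this with h | h
      · exact h
      · exact absurd h heX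
    · intro he
      exact ⟨⟨hA he, fun h => (hXA.ne_of_mem h he) rfl⟩, fun h => h.2 (Or.inl he)⟩
  -- independence characterizations
  have hLindep : ∀ I : Set α, I ⊆ A →
      (((M.contract' X).delete' (M.E \ (A ∪ X))).Indep I ↔ M.Indep (I ∪ X)) := by
    intro I hI
    rw [Matroid.delete', Matroid.restrict_indep_iff, indep_contract_iff' hXindep, hLground]
    constructor
    · rintro ⟨⟨_, h⟩, _⟩; exact h
    · intro h
      exact ⟨⟨fun e he => ⟨hA (hI he), fun hx => (hXA.ne_of_mem hx (hI he)) rfl⟩, h⟩, hI⟩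
  have hRindep : ∀ I : Set α, I ⊆ A →
      (((M.contract' X').delete' Y').Indep I ↔ M.Indep (I ∪ X')) := by
    intro I hI
    rw [Matroid.delete', Matroid.restrict_indep_iff, indep_contract_iff' hX', hRground]
    constructor
    · rintro ⟨⟨_, h⟩, _⟩; exact h
    · intro h
      exact ⟨⟨fun e he => ⟨hA (hI he), fun hx => (hX'A.ne_of_mem hx (hI he)) rfl⟩, h⟩, hI⟩
  -- main equivalence
  apply Matroid.ext_indep
  · show ((M.contract' X).E \ (M.E \ (A ∪ X))) = ((M.contract' X').E \ Y')
    rw [hLground, hRground]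
  intro I hI
  have hIA : I ⊆ A := by
    rwa [show ((M.contract' X).delete' (M.E \ (A ∪ X))).E
        = ((M.contract' X).E \ (M.E \ (A ∪ X))) from rfl, hLground] at hI
  rw [hLindep I hIA, hRindep I hIA]
  constructor
  · -- hard direction
    intro hIX
    by_contra hIX'
    have hdep : M.Dep (I ∪ X') :=
      ⟨hIX', Set.union_subset ((hIA.trans hA)) hXE'⟩
    obtain ⟨D, hDsub, hD⟩ := exists_circuit_subset' hdep
      (hfin.subset (Set.union_subset (hIA.trans hA) hXE'))
    have hDdep : M.Dep D := hD.prop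
    -- D \ X' is dependent in the minor
    have hSsubI : D \ X' ⊆ I := by
      rintro e ⟨he, heX'⟩
      rcases hDsub he with h | h
      · exact h
      · exact absurd h heX'
    have hSdep : ((M.contract' X').delete' Y').Dep (D \ X') := by
      rw [Matroid.delete', Matroid.restrict_dep_iff, hRground]
      refine ⟨fun hind => ?_, hSsubI.trans hIA⟩
      rw [indep_contract_iff' hX'] at hind
      have : D ⊆ (D \ X') ∪ X' := by
        intro e he
        by_cases h : e ∈ X'
        · exact Or.inr h
        · exact Or.inl ⟨he, h⟩
      exact hDdep.not_indep (hind.2.subset this)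
    obtain ⟨C₀, hC₀sub, hC₀⟩ := exists_circuit_subset' hSdep
      (hfin.subset ((Set.diff_subset.trans hDsub).trans
        (Set.union_subset (hIA.trans hA) hXE')))
    obtain ⟨i, rfl⟩ := (hC'all C₀).mp hC₀
    -- C i ⊆ I ∪ X, contradicting independence
    have hCi : C i ⊆ I ∪ X := by
      intro e he
      rcases (hC i).2.1 he with h | h
      · exact Or.inl (hSsubI (hC₀sub h))
      · refine Or.inr ⟨Set.mem_iUnion.mpr ⟨i, he⟩, fun heA => ?_⟩
        exact (hX'A.ne_of_mem h heA) rfl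
    exact (hC i).1.prop.not_indep (hIX.subset hCi)
  · intro h
    exact h.subset (Set.union_subset_union_right I hXsub)
end

section
/- For two simple graphs G and G' each with at least 3 vertices, G and G' are isomorphic if and only if the rank-3 matroids Φ(G) and Φ(G') are isomorphic. -/
open Set

open Matroid

/-- The ground set of the rank-3 matroid `Φ(G)`. -/
def phiGround {V : Type*} (G : SimpleGraph V) : Set (V ⊕ V ⊕ Sym2 V) :=
  Set.range Sum.inl ∪ Set.range (Sum.inr ∘ Sum.inl) ∪
    (Sum.inr ∘ Sum.inr) '' G.edgeSet

/-- The non-spanning circuits of `Φ(G)`: the parallel pairs `{x_i, x'_i}`, and the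
triples `{z_i, z_j, y_k}` where `e_k` joins `v_i` to `v_j`. -/
def phiNSCircuit {V : Type*} (G : SimpleGraph V) (C : Set (V ⊕ V ⊕ Sym2 V)) : Prop :=
  (∃ i : V, C = {Sum.inl i, Sum.inr (Sum.inl i)}) ∨
  (∃ i j : V, ∃ zi zj : V ⊕ V ⊕ Sym2 V, G.Adj i j ∧
    (zi = Sum.inl i ∨ zi = Sum.inr (Sum.inl i)) ∧
    (zj = Sum.inl j ∨ zj = Sum.inr (Sum.inl j)) ∧
    C = {zi, zj, Sum.inr (Sum.inr s(i, j))})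

/-- `M` is (a copy of) the rank-3 matroid `Φ(G)`: its ground set is `X ∪ X' ∪ Y` and its
independent sets are the subsets of size at most 3 containing no non-spanning circuit. -/
def IsPhi {V : Type*} (G : SimpleGraph V) (M : Matroid (V ⊕ V ⊕ Sym2 V)) : Prop :=
  M.E = phiGround G ∧
  ∀ I, M.Indep I ↔ I ⊆ phiGround G ∧ I.ncard ≤ 3 ∧ ∀ C, phiNSCircuit G C → ¬ C ⊆ I

/-- Matroid isomorphism: a bijection between ground sets preserving independence. -/
def MatroidIso {α β : Type*} (M : Matroid α) (N : Matroid β) : Prop :=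
  ∃ f : α → β, Set.BijOn f M.E N.E ∧ ∀ I ⊆ M.E, (M.Indep I ↔ N.Indep (f '' I))



section Aux
variable {V : Type*} {W : Type*}

def cls : V ⊕ V ⊕ Sym2 V → Option V
  | .inl i => some i
  | .inr (.inl i) => some i
  | .inr (.inr _) => none

lemma cls_eq_some {z : V ⊕ V ⊕ Sym2 V} {i : V} :
    cls z = some i ↔ z = Sum.inl i ∨ z = Sum.inr (Sum.inl i) := by
  rcases z with a | a | s <;> simp [cls]

lemma cls_eq_none {z : V ⊕ V ⊕ Sym2 V} :
    cls z = none ↔ ∃ s, z = Sum.inr (Sum.inr s) := by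
  rcases z with a | a | s <;> simp [cls]

lemma inl_mem_ground {G : SimpleGraph V} (i : V) : Sum.inl i ∈ phiGround G :=
  Set.mem_union_left _ (Set.mem_union_left _ (Set.mem_range_self i))

lemma inr_inl_mem_ground {G : SimpleGraph V} (i : V) :
    Sum.inr (Sum.inl i) ∈ phiGround G :=
  Set.mem_union_left _ (Set.mem_union_right _ ⟨i, rfl⟩)

lemma y_mem_ground_iff {G : SimpleGraph V} {s : Sym2 V} :
    Sum.inr (Sum.inr s) ∈ phiGround G ↔ s ∈ G.edgeSet := by
  simp [phiGround]

lemma clsSome_mem_ground {G : SimpleGraph V} {z : V ⊕ V ⊕ Sym2 V}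
    (h : (cls z).isSome) : z ∈ phiGround G := by
  obtain ⟨i, hi⟩ := Option.isSome_iff_exists.mp h
  rcases cls_eq_some.mp hi with rfl | rfl
  · exact inl_mem_ground i
  · exact inr_inl_mem_ground i

lemma ncard_triple {α : Type*} {a b c : α} (hab : a ≠ b) (hac : a ≠ c) (hbc : b ≠ c) :
    ({a, b, c} : Set α).ncard = 3 := by
  rw [Set.ncard_insert_of_notMem (by simp [hab, hac]), Set.ncard_pair hbc]

def PhiIndep (G : SimpleGraph V) (I : Set (V ⊕ V ⊕ Sym2 V)) : Prop :=
  I ⊆ phiGround G ∧ I.ncard ≤ 3 ∧ ∀ C, phiNSCircuit G C → ¬ C ⊆ I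

lemma not_phiIndep_iff {G : SimpleGraph V} {I : Set (V ⊕ V ⊕ Sym2 V)}
    (hIG : I ⊆ phiGround G) (hcard : I.ncard ≤ 3) :
    ¬ PhiIndep G I ↔ ∃ C, phiNSCircuit G C ∧ C ⊆ I := by
  constructor
  · intro h
    by_contra h'
    push_neg at h'
    exact h ⟨hIG, hcard, fun C hC => h' C hC⟩
  · rintro ⟨C, hC, hsub⟩ ⟨-, -, h⟩
    exact h C hC hsub

lemma ns_triple_ncard {zi zj : V ⊕ V ⊕ Sym2 V} {i j : V} {s : Sym2 V} (hij : i ≠ j)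
    (hzi : cls zi = some i) (hzj : cls zj = some j) :
    ({zi, zj, Sum.inr (Sum.inr s)} : Set (V ⊕ V ⊕ Sym2 V)).ncard = 3 := by
  refine ncard_triple ?_ ?_ ?_
  · rintro rfl; rw [hzi] at hzj; exact hij (Option.some.inj hzj)
  · rintro rfl; simp [cls] at hzi
  · rintro rfl; simp [cls] at hzj

lemma dep_pair_iff {G : SimpleGraph V} {a b : V ⊕ V ⊕ Sym2 V} (hab : a ≠ b)
    (ha : a ∈ phiGround G) (hb : b ∈ phiGround G) :
    ¬ PhiIndep G {a, b} ↔ (cls a).isSome ∧ cls a = cls b := by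
  have hsub : ({a, b} : Set _) ⊆ phiGround G := by
    rw [Set.insert_subset_iff]; exact ⟨ha, Set.singleton_subset_iff.mpr hb⟩
  have hcard : ({a, b} : Set _).ncard = 2 := Set.ncard_pair hab
  rw [not_phiIndep_iff hsub (by omega)]
  constructor
  · rintro ⟨C, hC, hCsub⟩
    rcases hC with ⟨i, rfl⟩ | ⟨i, j, zi, zj, hadj, hzi, hzj, rfl⟩
    · have h1 : Sum.inl i ∈ ({a, b} : Set _) := hCsub (by simp)
      have h2 : Sum.inr (Sum.inl i) ∈ ({a, b} : Set _) := hCsub (by simp)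
      simp only [Set.mem_insert_iff, Set.mem_singleton_iff] at h1 h2
      rcases h1 with rfl | rfl
      · rcases h2 with h2 | rfl
        · exact absurd h2 (by simp)
        · simp [cls]
      · rcases h2 with rfl | h2
        · simp [cls]
        · exact absurd h2 (by simp)
    · exfalso
      have h3 : ({zi, zj, Sum.inr (Sum.inr s(i, j))} : Set _).ncard = 3 :=
        ns_triple_ncard hadj.ne (cls_eq_some.mpr hzi) (cls_eq_some.mpr hzj)
      have := Set.ncard_le_ncard hCsub (Set.toFinite _)
      omega
  · rintro ⟨hsome, heq⟩
    obtain ⟨i, hi⟩ := Option.isSome_iff_exists.mp hsome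
    have hbi : cls b = some i := heq ▸ hi
    refine ⟨{Sum.inl i, Sum.inr (Sum.inl i)}, Or.inl ⟨i, rfl⟩, ?_⟩
    rcases cls_eq_some.mp hi with rfl | rfl <;> rcases cls_eq_some.mp hbi with rfl | rfl <;>
      first | (exact absurd rfl hab) | (intro x hx; rcases hx with rfl | hx <;> simp_all)

lemma isSome_iff_partner {G : SimpleGraph V} {a : V ⊕ V ⊕ Sym2 V} (ha : a ∈ phiGround G) :
    (cls a).isSome ↔ ∃ b ∈ phiGround G, b ≠ a ∧ ¬ PhiIndep G {a, b} := by
  constructor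
  · intro h
    obtain ⟨i, hi⟩ := Option.isSome_iff_exists.mp h
    rcases cls_eq_some.mp hi with rfl | rfl
    · refine ⟨Sum.inr (Sum.inl i), inr_inl_mem_ground i, by simp, ?_⟩
      exact (dep_pair_iff (by simp) ha (inr_inl_mem_ground i)).mpr (by simp [cls])
    · refine ⟨Sum.inl i, inl_mem_ground i, by simp, ?_⟩
      exact (dep_pair_iff (by simp) ha (inl_mem_ground i)).mpr (by simp [cls])
  · rintro ⟨b, hbG, hne, hdep⟩
    exact ((dep_pair_iff (Ne.symm hne) ha hbG).mp hdep).1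

lemma adj_dep_triple {G : SimpleGraph V} {a b : V ⊕ V ⊕ Sym2 V} {i j : V}
    (hadj : G.Adj i j) (hai : cls a = some i) (hbj : cls b = some j) :
    ¬ PhiIndep G {a, b, Sum.inr (Sum.inr s(i, j))} := fun h =>
  h.2.2 _ (Or.inr ⟨i, j, a, b, hadj, cls_eq_some.mp hai, cls_eq_some.mp hbj, rfl⟩)
    subset_rfl

lemma dep_triple_adj {G : SimpleGraph V} {a b : V ⊕ V ⊕ Sym2 V} {i j : V} {s : Sym2 V}
    (hij : i ≠ j) (hai : cls a = some i) (hbj : cls b = some j)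
    (hG : ({a, b, Sum.inr (Sum.inr s)} : Set _) ⊆ phiGround G)
    (hdep : ¬ PhiIndep G {a, b, Sum.inr (Sum.inr s)}) :
    G.Adj i j := by
  have hcard : ({a, b, Sum.inr (Sum.inr s)} : Set _).ncard = 3 := ns_triple_ncard hij hai hbj
  rw [not_phiIndep_iff hG (by omega)] at hdep
  obtain ⟨C, hC, hCsub⟩ := hdep
  rcases hC with ⟨m, rfl⟩ | ⟨p, q, zp, zq, hadj, hzp, hzq, rfl⟩
  · exfalso
    have h1 : Sum.inl m ∈ ({a, b, Sum.inr (Sum.inr s)} : Set _) := hCsub (by simp)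
    have h2 : Sum.inr (Sum.inl m) ∈ ({a, b, Sum.inr (Sum.inr s)} : Set _) := hCsub (by simp)
    rcases h1 with h1 | h1 | (h1 : _ = _) <;> rcases h2 with h2 | h2 | (h2 : _ = _) <;>
      subst_vars <;> simp_all [cls]
  · have hzpc : cls zp = some p := cls_eq_some.mpr hzp
    have hzqc : cls zq = some q := cls_eq_some.mpr hzq
    have hCcard : ({zp, zq, Sum.inr (Sum.inr s(p, q))} : Set _).ncard = 3 :=
      ns_triple_ncard hadj.ne hzpc hzqc
    have hCeq : ({zp, zq, Sum.inr (Sum.inr s(p, q))} : Set _) =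
        ({a, b, Sum.inr (Sum.inr s)} : Set _) :=
      Set.eq_of_subset_of_ncard_le hCsub (by omega) (Set.toFinite _)
    have hmema : a ∈ ({zp, zq, Sum.inr (Sum.inr s(p, q))} : Set _) := hCeq ▸ (by simp)
    have hmemb : b ∈ ({zp, zq, Sum.inr (Sum.inr s(p, q))} : Set _) := hCeq ▸ (by simp)
    have hab : a ≠ b := by
      rintro rfl; rw [hai] at hbj; exact hij (Option.some.inj hbj)
    rcases hmema with rfl | rfl | rfl
    · -- a = zp, so i = p
      have hip : i = p := Option.some.inj (hai ▸ hzpc)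
      rcases hmemb with rfl | rfl | rfl
      · exact absurd rfl hab
      · have hjq : j = q := Option.some.inj (hbj ▸ hzqc)
        subst hip; subst hjq; exact hadj
      · rw [cls_eq_none.mpr ⟨_, rfl⟩] at hbj; exact absurd hbj (by simp)
    · have hiq : i = q := Option.some.inj (hai ▸ hzqc)
      rcases hmemb with rfl | rfl | rfl
      · have hjp : j = p := Option.some.inj (hbj ▸ hzpc)
        subst hiq; subst hjp; exact hadj.symm
      · exact absurd rfl hab
      · rw [cls_eq_none.mpr ⟨_, rfl⟩] at hbj; exact absurd hbj (by simp)
    · rw [cls_eq_none.mpr ⟨_, rfl⟩] at hai; exact absurd hai (by simp)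

end Aux

section ZMap
variable {V : Type*} {W : Type*} {G : SimpleGraph V} {G' : SimpleGraph W}

def zmap (ψ : V → W) : V ⊕ V ⊕ Sym2 V → W ⊕ W ⊕ Sym2 W :=
  Sum.map ψ (Sum.map ψ (Sym2.map ψ))

lemma zmap_injective {ψ : V → W} (hψ : Function.Injective ψ) :
    Function.Injective (zmap ψ) :=
  hψ.sumMap (hψ.sumMap (Sym2.map.injective hψ))

lemma zmap_symm_apply (e : G ≃g G') (z : V ⊕ V ⊕ Sym2 V) :
    zmap ⇑e.symm (zmap ⇑e z) = z := by
  have h : ⇑e.symm ∘ ⇑e = id := funext fun v => e.symm_apply_apply v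
  rcases z with a | a | s <;> simp [zmap, Sym2.map_map, h]

lemma zmap_mapsTo (e : G ≃g G') :
    Set.MapsTo (zmap ⇑e) (phiGround G) (phiGround G') := by
  rintro z hz
  rcases hz with (⟨i, rfl⟩ | ⟨i, rfl⟩) | ⟨s, hs, rfl⟩
  · exact inl_mem_ground (e i)
  · exact inr_inl_mem_ground (e i)
  · show Sum.inr (Sum.inr (Sym2.map ⇑e s)) ∈ phiGround G'
    rw [y_mem_ground_iff]
    induction s with
    | _ u v =>
      rw [Sym2.map_pair_eq, SimpleGraph.mem_edgeSet] at *
      exact e.map_adj_iff.mpr hs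

lemma zmap_ns (e : G ≃g G') {C : Set (V ⊕ V ⊕ Sym2 V)} (h : phiNSCircuit G C) :
    phiNSCircuit G' (zmap ⇑e '' C) := by
  rcases h with ⟨i, rfl⟩ | ⟨i, j, zi, zj, hadj, hzi, hzj, rfl⟩
  · exact Or.inl ⟨e i, by simp [Set.image_insert_eq, zmap]⟩
  · refine Or.inr ⟨e i, e j, zmap ⇑e zi, zmap ⇑e zj, e.map_adj_iff.mpr hadj, ?_, ?_, ?_⟩
    · rcases hzi with rfl | rfl <;> simp [zmap]
    · rcases hzj with rfl | rfl <;> simp [zmap]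
    · simp [Set.image_insert_eq, zmap, Sym2.map_pair_eq]

lemma phiIndep_zmap (e : G ≃g G') {I : Set (V ⊕ V ⊕ Sym2 V)} (h : PhiIndep G I) :
    PhiIndep G' (zmap ⇑e '' I) := by
  refine ⟨fun w hw => ?_, ?_, ?_⟩
  · obtain ⟨z, hz, rfl⟩ := hw
    exact zmap_mapsTo e (h.1 hz)
  · rw [Set.ncard_image_of_injective _ (zmap_injective (RelIso.injective e))]
    exact h.2.1
  · intro C' hC' hsub
    have hpre : zmap ⇑e.symm '' C' ⊆ I := by
      rintro z ⟨w, hw, rfl⟩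
      obtain ⟨u, hu, rfl⟩ := hsub hw
      rwa [zmap_symm_apply]
    exact h.2.2 _ (zmap_ns e.symm hC') hpre

end ZMap


/-- Two simple graphs on at least three vertices are isomorphic if and only if the
matroids `Φ(G)` and `Φ(G')` are isomorphic. -/
theorem stmt18 {V W : Type*} [Fintype V] [Fintype W]
    (G : SimpleGraph V) (G' : SimpleGraph W)
    (hV : 3 ≤ Fintype.card V) (hW : 3 ≤ Fintype.card W)
    (M : Matroid (V ⊕ V ⊕ Sym2 V)) (N : Matroid (W ⊕ W ⊕ Sym2 W))
    (hM : IsPhi G M) (hN : IsPhi G' N) :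
    Nonempty (G ≃g G') ↔ MatroidIso M N := by
  have hMI : ∀ I, M.Indep I ↔ PhiIndep G I := hM.2
  have hNI : ∀ I, N.Indep I ↔ PhiIndep G' I := hN.2
  constructor
  · rintro ⟨e⟩
    refine ⟨zmap ⇑e, ?_, ?_⟩
    · rw [hM.1, hN.1]
      refine ⟨zmap_mapsTo e, (zmap_injective (RelIso.injective e)).injOn, ?_⟩
      intro w hw
      refine ⟨zmap ⇑e.symm w, zmap_mapsTo e.symm hw, ?_⟩
      have := zmap_symm_apply e.symm w
      rwa [show e.symm.symm = e from rfl] at this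
    · intro I _
      rw [hMI, hNI]
      constructor
      · exact phiIndep_zmap e
      · intro h'
        have h2 := phiIndep_zmap e.symm h'
        rwa [Set.image_image, show (fun z => zmap ⇑e.symm (zmap ⇑e z)) '' I = I from by
          simp only [zmap_symm_apply]; exact Set.image_id I] at h2
  · rintro ⟨f, hbij, hind⟩
    rw [hM.1, hN.1] at hbij
    obtain ⟨hmapsto, hinjOn, hsurjOn⟩ := hbij
    have hPI : ∀ I ⊆ phiGround G, (PhiIndep G I ↔ PhiIndep G' (f '' I)) := by
      intro I hI
      have := hind I (by rw [hM.1]; exact hI)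
      rwa [hMI, hNI] at this
    haveI : Nonempty W := Fintype.card_pos_iff.mp (by omega)
    -- Step A : f preserves being an x-type element
    have hsomeA : ∀ a ∈ phiGround G, ((cls a).isSome ↔ (cls (f a)).isSome) := by
      intro a ha
      rw [isSome_iff_partner ha, isSome_iff_partner (hmapsto ha)]
      constructor
      · rintro ⟨b, hbG, hba, hdep⟩
        refine ⟨f b, hmapsto hbG, fun h => hba (hinjOn hbG ha h), ?_⟩
        rw [show ({f a, f b} : Set _) = f '' {a, b} from by simp [Set.image_insert_eq]]
        intro h
        exact hdep ((hPI {a, b} (by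
          rw [Set.insert_subset_iff]
          exact ⟨ha, Set.singleton_subset_iff.mpr hbG⟩)).mpr h)
      · rintro ⟨b', hb'G, hb'ne, hdep⟩
        obtain ⟨b, hbG, rfl⟩ := hsurjOn hb'G
        refine ⟨b, hbG, fun h => hb'ne (by rw [h]), ?_⟩
        intro h
        apply hdep
        rw [show ({f a, f b} : Set _) = f '' {a, b} from by simp [Set.image_insert_eq]]
        exact (hPI {a, b} (by
          rw [Set.insert_subset_iff]
          exact ⟨ha, Set.singleton_subset_iff.mpr hbG⟩)).mp h
    have hφex : ∀ i : V, ∃ j, cls (f (Sum.inl i)) = some j := by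
      intro i
      exact Option.isSome_iff_exists.mp
        ((hsomeA (Sum.inl i) (inl_mem_ground i)).mp (by simp [cls]))
    choose φ hφ using hφex
    -- the partner x'_i also maps into class φ i
    have hφ' : ∀ i : V, cls (f (Sum.inr (Sum.inl i))) = some (φ i) := by
      intro i
      have hdep : ¬ PhiIndep G {Sum.inl i, Sum.inr (Sum.inl i)} :=
        (dep_pair_iff (by simp) (inl_mem_ground i) (inr_inl_mem_ground i)).mpr
          (by simp [cls])
      have hdep' : ¬ PhiIndep G' {f (Sum.inl i), f (Sum.inr (Sum.inl i))} := by
        rw [show ({f (Sum.inl i), f (Sum.inr (Sum.inl i))} : Set _) =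
            f '' {Sum.inl i, Sum.inr (Sum.inl i)} from by simp [Set.image_insert_eq]]
        intro h
        exact hdep ((hPI _ (by
          rw [Set.insert_subset_iff]
          exact ⟨inl_mem_ground i,
            Set.singleton_subset_iff.mpr (inr_inl_mem_ground i)⟩)).mpr h)
      have hne : f (Sum.inl i) ≠ f (Sum.inr (Sum.inl i)) := by
        intro h
        exact absurd (hinjOn (inl_mem_ground i) (inr_inl_mem_ground i) h) (by simp)
      have := (dep_pair_iff hne (hmapsto (inl_mem_ground i))
        (hmapsto (inr_inl_mem_ground i))).mp hdep'
      rw [← this.2, hφ i]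
    have hφinj : Function.Injective φ := by
      intro i i' h
      by_contra hne
      have hindpair : PhiIndep G {Sum.inl i, Sum.inl i'} := by
        by_contra hd
        have := (dep_pair_iff (by simp [hne]) (inl_mem_ground i)
          (inl_mem_ground i')).mp hd
        exact hne (by simpa [cls] using this.2)
      have hdep' : ¬ PhiIndep G' {f (Sum.inl i), f (Sum.inl i')} := by
        refine (dep_pair_iff ?_ (hmapsto (inl_mem_ground i))
          (hmapsto (inl_mem_ground i'))).mpr ?_
        · intro heq
          exact hne (by simpa using hinjOn (inl_mem_ground i) (inl_mem_ground i') heq)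
        · rw [hφ i, hφ i', h]; simp
      apply hdep'
      rw [show ({f (Sum.inl i), f (Sum.inl i')} : Set _) =
          f '' {Sum.inl i, Sum.inl i'} from by simp [Set.image_insert_eq]]
      exact (hPI _ (by
        rw [Set.insert_subset_iff]
        exact ⟨inl_mem_ground i,
          Set.singleton_subset_iff.mpr (inl_mem_ground i')⟩)).mp hindpair
    have hφsurj : Function.Surjective φ := by
      intro j
      obtain ⟨a, haG, hfa⟩ := hsurjOn (inl_mem_ground (G := G') j)
      have hsome : (cls a).isSome := (hsomeA a haG).mpr (by rw [hfa]; simp [cls])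
      obtain ⟨i, hi⟩ := Option.isSome_iff_exists.mp hsome
      rcases cls_eq_some.mp hi with rfl | rfl
      · refine ⟨i, ?_⟩
        have := hφ i; rw [hfa] at this
        simpa [cls] using this.symm
      · refine ⟨i, ?_⟩
        have := hφ' i; rw [hfa] at this
        simpa [cls] using this.symm
    have hadj1 : ∀ i j, G.Adj i j → G'.Adj (φ i) (φ j) := by
      intro i j hadj
      have hij : i ≠ j := hadj.ne
      have hDsub : ({Sum.inl i, Sum.inl j, Sum.inr (Sum.inr s(i, j))} : Set _) ⊆
          phiGround G := by
        rw [Set.insert_subset_iff, Set.insert_subset_iff]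
        exact ⟨inl_mem_ground i, inl_mem_ground j,
          Set.singleton_subset_iff.mpr (y_mem_ground_iff.mpr hadj)⟩
      have hdep : ¬ PhiIndep G {Sum.inl i, Sum.inl j, Sum.inr (Sum.inr s(i, j))} :=
        adj_dep_triple hadj (by simp [cls]) (by simp [cls])
      have hdep' : ¬ PhiIndep G'
          (f '' {Sum.inl i, Sum.inl j, Sum.inr (Sum.inr s(i, j))}) :=
        fun h => hdep ((hPI _ hDsub).mpr h)
      have hyc : cls (f (Sum.inr (Sum.inr s(i, j)))) = none := by
        rw [← Option.not_isSome_iff_eq_none]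
        intro h
        have := (hsomeA _ (y_mem_ground_iff.mpr hadj)).mpr h
        simp [cls] at this
      obtain ⟨t, ht⟩ := cls_eq_none.mp hyc
      rw [show (f '' {Sum.inl i, Sum.inl j, Sum.inr (Sum.inr s(i, j))}) =
          {f (Sum.inl i), f (Sum.inl j), Sum.inr (Sum.inr t)} from by
        rw [← ht]; simp [Set.image_insert_eq]] at hdep'
      refine dep_triple_adj (hφinj.ne hij) (hφ i) (hφ j) ?_ hdep'
      rw [Set.insert_subset_iff, Set.insert_subset_iff, ← ht]
      exact ⟨hmapsto (inl_mem_ground i), hmapsto (inl_mem_ground j),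
        Set.singleton_subset_iff.mpr (hmapsto (hDsub (by simp)))⟩
    have hadj2 : ∀ i j, G'.Adj (φ i) (φ j) → G.Adj i j := by
      intro i j hadj'
      have hij : i ≠ j := fun h => hadj'.ne (by rw [h])
      obtain ⟨c, hcG, hfc⟩ := hsurjOn (y_mem_ground_iff.mpr
        ((SimpleGraph.mem_edgeSet G').mpr hadj'))
      have hc_none : cls c = none := by
        rw [← Option.not_isSome_iff_eq_none]
        intro h
        have := (hsomeA c hcG).mp h
        rw [hfc] at this
        simp [cls] at this
      obtain ⟨s, rfl⟩ := cls_eq_none.mp hc_none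
      have hsE : s ∈ G.edgeSet := y_mem_ground_iff.mp hcG
      have hDsub : ({Sum.inl i, Sum.inl j, Sum.inr (Sum.inr s)} : Set _) ⊆
          phiGround G := by
        rw [Set.insert_subset_iff, Set.insert_subset_iff]
        exact ⟨inl_mem_ground i, inl_mem_ground j,
          Set.singleton_subset_iff.mpr (y_mem_ground_iff.mpr hsE)⟩
      have hdep' : ¬ PhiIndep G' (f '' {Sum.inl i, Sum.inl j, Sum.inr (Sum.inr s)}) := by
        rw [show (f '' {Sum.inl i, Sum.inl j, Sum.inr (Sum.inr s)}) =
            {f (Sum.inl i), f (Sum.inl j), Sum.inr (Sum.inr s(φ i, φ j))} from by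
          rw [← hfc]; simp [Set.image_insert_eq]]
        exact adj_dep_triple hadj' (hφ i) (hφ j)
      have hdep : ¬ PhiIndep G {Sum.inl i, Sum.inl j, Sum.inr (Sum.inr s)} :=
        fun h => hdep' ((hPI _ hDsub).mp h)
      exact dep_triple_adj hij (by simp [cls]) (by simp [cls]) hDsub hdep
    exact ⟨⟨Equiv.ofBijective φ ⟨hφinj, hφsurj⟩, fun {a b} => ⟨hadj2 a b, hadj1 a b⟩⟩⟩
end
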